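/- arXiv:2310.02715 — 2 statements merged into one kernel-verified Lean document; each statement's English description precedes it below -/
import Mathlib

section
/- The function R ↦ (R²/(R−1))·((R−1)/R)^(1/R) is strictly increasing for real R ≥ 3. -/
open Real

noncomputable def auxF (R : ℝ) : ℝ :=
  2 * Real.log R - Real.log (R - 1) + (1 / R) * (Real.log (R - 1) - Real.log R)

lemma auxF_hasDerivAt {R : ℝ} (hR : 1 < R) :
    HasDerivAt auxF
      (2 * (1 / R) - 1 / (R - 1) +
        ((-(R ^ 2)⁻¹) * (Real.log (R - 1) - Real.log R)
          + (1 / R) * (1 / (R - 1) - 1 / R))) R := by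
  have hR0 : R ≠ 0 := by linarith
  have hR1 : R - 1 ≠ 0 := by linarith
  have h1 : HasDerivAt (fun x : ℝ => Real.log x) (1 / R) R := by
    simpa [one_div] using Real.hasDerivAt_log hR0
  have h2 : HasDerivAt (fun x : ℝ => Real.log (x - 1)) (1 / (R - 1)) R := by
    have := (Real.hasDerivAt_log hR1).comp R ((hasDerivAt_id R).sub_const 1)
    simpa [one_div, Function.comp_def] using this
  have h3 : HasDerivAt (fun x : ℝ => 1 / x) (-(R ^ 2)⁻¹) R := by
    simpa [one_div] using hasDerivAt_inv hR0
  exact ((h1.const_mul 2).sub h2).add (h3.mul (h2.sub h1))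

lemma auxF_mono : StrictMonoOn auxF (Set.Ici (3 : ℝ)) := by
  apply strictMonoOn_of_deriv_pos (convex_Ici 3)
  · intro x hx
    exact (auxF_hasDerivAt (by simp at hx; linarith)).continuousAt.continuousWithinAt
  · intro x hx
    rw [interior_Ici] at hx
    have hx3 : (3 : ℝ) < x := hx
    have h1 : 1 < x := by linarith
    rw [(auxF_hasDerivAt h1).deriv]
    have hlog : Real.log (x - 1) < Real.log x := Real.log_lt_log (by linarith) (by linarith)
    have ha : 0 < 2 * (1 / x) - 1 / (x - 1) := by
      rw [sub_pos, mul_one_div, div_lt_div_iff₀ (by linarith) (by linarith)]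
      nlinarith
    have hb : 0 < (-(x ^ 2)⁻¹) * (Real.log (x - 1) - Real.log x) := by
      apply mul_pos_of_neg_of_neg
      · simp only [neg_neg, neg_lt_zero]
        positivity
      · linarith
    have hc : 0 < (1 / x) * (1 / (x - 1) - 1 / x) := by
      apply mul_pos (by positivity)
      rw [sub_pos, div_lt_div_iff₀ (by linarith) (by linarith)]
      linarith
    linarith

lemma eq_exp {R : ℝ} (hR : 1 < R) :
    R ^ 2 / (R - 1) * ((R - 1) / R) ^ (1 / R) = Real.exp (auxF R) := by
  have hR0 : (0 : ℝ) < R := by linarith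
  have hR1 : (0 : ℝ) < R - 1 := by linarith
  rw [Real.rpow_def_of_pos (by positivity)]
  rw [← Real.exp_log (show (0:ℝ) < R ^ 2 / (R - 1) by positivity)]
  rw [← Real.exp_add]
  congr 1
  rw [Real.log_div (by positivity) hR1.ne', Real.log_div hR1.ne' hR0.ne', Real.log_pow]
  unfold auxF
  push_cast
  ring

theorem stmt_4 :
    StrictMonoOn (fun R : ℝ => R ^ 2 / (R - 1) * ((R - 1) / R) ^ (1 / R))
      (Set.Ici (3 : ℝ)) := by
  intro a ha b hb hab
  simp only [Set.mem_Ici] at ha hb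
  have h1a : (1 : ℝ) < a := by linarith
  have h1b : (1 : ℝ) < b := by linarith
  simp only
  rw [eq_exp h1a, eq_exp h1b, Real.exp_lt_exp]
  exact auxF_mono (by simp [ha]) (by simp [hb]) hab
end

section
/- For integers R ≥ 3, w ≥ 1, and prime power q with binom(wR, R−1) ≤ q+1, the quantity 1 − G/(q^{R−2}(q+1)), where G = q^{R−3}·binom(wR,R−1)·(q + 1/2 − (1/2)·binom(wR,R−1)), is strictly less than exp((R^R/R!)·(−(w−1)^{R−1}/(q+1) + w^{2R−2}·R^R/(2q²·R!))). -/
theorem stmt_12 (R w q : ℕ) (hR : 3 ≤ R) (hw : 1 ≤ w) (hq : IsPrimePow q)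
    (hB : Nat.choose (w * R) (R - 1) ≤ q + 1) :
    1 - ((q : ℝ) ^ (R - 3) * (Nat.choose (w * R) (R - 1) : ℝ) *
          ((q : ℝ) + 1 / 2 - (1 / 2) * (Nat.choose (w * R) (R - 1) : ℝ))) /
        ((q : ℝ) ^ (R - 2) * ((q : ℝ) + 1)) <
      Real.exp (((R : ℝ) ^ R / (R.factorial : ℝ)) *
        (-(((w : ℝ) - 1) ^ (R - 1)) / ((q : ℝ) + 1) +
          (w : ℝ) ^ (2 * R - 2) * (R : ℝ) ^ R / (2 * (q : ℝ) ^ 2 * (R.factorial : ℝ)))) := by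
  have hq1 : 1 < q := hq.one_lt
  have hq2 : (2:ℝ) ≤ (q:ℝ) := by exact_mod_cast hq1
  have hq0 : (0:ℝ) < (q:ℝ) := by linarith
  have hq1' : (0:ℝ) < (q:ℝ) + 1 := by linarith
  set B : ℝ := ((w*R).choose (R-1) : ℝ) with hBdef
  have hRm : R ≤ w * R := Nat.le_mul_of_pos_left R hw
  have hk : R - 1 ≤ w * R := le_trans (Nat.sub_le _ _) hRm
  have hB3 : (1:ℝ) ≤ B := by
    have := Nat.choose_pos hk
    rw [hBdef]; exact_mod_cast this
  -- descending factorial bounds (in ℕ)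
  have hd1 : ((w*R) + 1 - (R-1))^(R-1) ≤ (R-1).factorial * (w*R).choose (R-1) := by
    rw [← Nat.descFactorial_eq_factorial_mul_choose]
    exact Nat.pow_sub_le_descFactorial _ _
  have hd2 : (R-1).factorial * (w*R).choose (R-1) ≤ (w*R)^(R-1) := by
    rw [← Nat.descFactorial_eq_factorial_mul_choose]
    exact Nat.descFactorial_le_pow _ _
  have hd1' : ((w-1)*R)^(R-1) ≤ (R-1).factorial * (w*R).choose (R-1) := by
    refine le_trans (Nat.pow_le_pow_left ?_ _) hd1
    have h : (w-1)*R = w*R - R := by rw [Nat.sub_one_mul]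
    omega
  set Fm : ℝ := ((R-1).factorial : ℝ) with hFdef
  have hF0 : (0:ℝ) < Fm := by rw [hFdef]; exact_mod_cast (R-1).factorial_pos
  set c : ℝ := (w:ℝ)^(R-1) with hcdef
  set a : ℝ := ((w:ℝ)-1)^(R-1) with hadef
  set P : ℝ := (R:ℝ)^(R-1) / Fm with hPdef
  have hP0 : (0:ℝ) < P := by
    apply div_pos _ hF0
    positivity
  have hcast1 : P * a ≤ B := by
    rw [div_mul_eq_mul_div, div_le_iff₀ hF0]
    have h : (((w-1)*R : ℕ) : ℝ)^(R-1) ≤ Fm * B := by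
      rw [hFdef, hBdef]; exact_mod_cast hd1'
    calc (R:ℝ)^(R-1) * a = (((w-1)*R : ℕ) : ℝ)^(R-1) := by
          rw [hadef]
          push_cast [Nat.cast_sub hw]
          rw [← mul_pow]
          congr 1
          ring
      _ ≤ Fm * B := h
      _ = B * Fm := by ring
  have hcast2 : B ≤ P * c := by
    rw [div_mul_eq_mul_div, le_div_iff₀ hF0]
    have h : Fm * B ≤ ((w*R : ℕ) : ℝ)^(R-1) := by
      rw [hFdef, hBdef]; exact_mod_cast hd2
    calc B * Fm = Fm * B := by ring
      _ ≤ ((w*R : ℕ) : ℝ)^(R-1) := h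
      _ = (R:ℝ)^(R-1) * c := by rw [hcdef]; push_cast; ring
  have ha0 : (0:ℝ) ≤ a := by
    rw [hadef]
    have h1w : (1:ℝ) ≤ (w:ℝ) := by exact_mod_cast hw
    exact pow_nonneg (by linarith) _
  -- rewrite R^R / R! as P
  have hPeq : (R:ℝ)^R / (R.factorial : ℝ) = P := by
    have hfac : (R:ℝ) * Fm = (R.factorial : ℝ) := by
      rw [hFdef]; exact_mod_cast Nat.mul_factorial_pred (by omega)
    have hpow : (R:ℝ)^R = (R:ℝ)^(R-1) * (R:ℝ) := by
      rw [← pow_succ, Nat.sub_add_cancel (by omega)]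
    have hR0 : (0:ℝ) < (R:ℝ) := by
      have : 0 < R := by omega
      exact_mod_cast this
    rw [hPdef, ← hfac, hpow]
    field_simp
  have hwexp : (w:ℝ)^(2*R-2) = c^2 := by
    rw [hcdef, ← pow_mul, show (R-1)*2 = 2*R-2 by omega]
  rw [hPeq, hwexp]
  rw [show c^2*(R:ℝ)^R/(2*(q:ℝ)^2*(R.factorial:ℝ)) = c^2*P/(2*(q:ℝ)^2) from by
    rw [← hPeq]; ring]
  -- rewrite LHS
  have hx_eq : ((q : ℝ) ^ (R - 3) * B * ((q : ℝ) + 1 / 2 - (1 / 2) * B)) /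
        ((q : ℝ) ^ (R - 2) * ((q : ℝ) + 1))
      = B * ((q:ℝ) + 1/2 - B/2) / ((q:ℝ) * ((q:ℝ)+1)) := by
    rw [show R - 2 = (R-3) + 1 by omega, pow_succ]
    have hqp : (q:ℝ)^(R-3) ≠ 0 := by positivity
    field_simp
  rw [hx_eq]
  set x : ℝ := B * ((q:ℝ) + 1/2 - B/2) / ((q:ℝ) * ((q:ℝ)+1)) with hxdef
  have h1 : 1 - x ≤ Real.exp (-x) := by
    have := Real.add_one_le_exp (-x)
    linarith
  refine lt_of_le_of_lt h1 (Real.exp_lt_exp.mpr ?_)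
  -- key inequality: -x < P * (-a/(q+1) + c^2 * P / (2 q^2))
  rw [hxdef]
  have hD : (0:ℝ) < ((q:ℝ)*((q:ℝ)+1))*(2*(q:ℝ)^2) := by positivity
  rw [show P * (-a/((q:ℝ)+1) + c^2*P/(2*(q:ℝ)^2))
      = (-(P*a)*(2*(q:ℝ)^2*(q:ℝ)) + c^2*P^2*((q:ℝ)*((q:ℝ)+1))) / (((q:ℝ)*((q:ℝ)+1))*(2*(q:ℝ)^2)) by
    field_simp]
  rw [show -(B * ((q:ℝ) + 1/2 - B/2) / ((q:ℝ)*((q:ℝ)+1)))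
      = (-(B * ((q:ℝ) + 1/2 - B/2)) * (2*(q:ℝ)^2)) / (((q:ℝ)*((q:ℝ)+1))*(2*(q:ℝ)^2)) by
    rw [mul_div_mul_right _ _ (by positivity : (2*(q:ℝ)^2) ≠ 0), neg_div]]
  rw [div_lt_div_iff_of_pos_right hD]
  have hBpos : (0:ℝ) ≤ B := le_trans zero_le_one hB3
  have hsq : B*B ≤ (P*c)*(P*c) :=
    mul_le_mul hcast2 hcast2 hBpos (le_trans hBpos hcast2)
  nlinarith [mul_le_mul_of_nonneg_left hcast1 (by positivity : (0:ℝ) ≤ 2*(q:ℝ)^2*(q:ℝ)),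
    mul_le_mul_of_nonneg_left hsq (by positivity : (0:ℝ) ≤ (q:ℝ)^2),
    mul_pos hq0 (mul_pos (mul_pos hP0 hP0) (lt_of_lt_of_le zero_lt_one (le_trans (le_trans hB3 hcast2) (le_refl _)))),
    sq_nonneg ((q:ℝ)*B), hq2, hB3, mul_le_mul_of_nonneg_left hB3 (by positivity : (0:ℝ) ≤ (q:ℝ)^2)]
end
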